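/- Let μ > 0 and let n > k ≥ 1 be integers. Then ∫₀^∞ e^{−μs} · ( Σ_{j=0}^{k−1} C(n−1, j) (1 − e^{−μs})^j e^{−μ(n−1−j)s} ) ds = k/(nμ), where C(·,·) denotes the binomial coefficient. -/

import Mathlib

open MeasureTheory Set Filter Real Topology

-- integrability of (1-e^{-μs})^j e^{-μcs} on (0,∞) for c ≥ 1
lemma MDS_integrable (μ : ℝ) (hμ : 0 < μ) (j : ℕ) (c : ℝ) (hc : 1 ≤ c) :
    IntegrableOn (fun s : ℝ => (1 - Real.exp (-μ * s)) ^ j * Real.exp (-μ * c * s))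
      (Set.Ioi (0:ℝ)) := by
  apply Integrable.mono' (exp_neg_integrableOn_Ioi 0 hμ)
  · apply Continuous.aestronglyMeasurable
    fun_prop
  · filter_upwards [ae_restrict_mem measurableSet_Ioi] with s hs
    have hs' : (0:ℝ) < s := hs
    have hu1 : Real.exp (-μ * s) ≤ 1 := by
      apply Real.exp_le_one_iff.mpr
      nlinarith
    have hu0 : 0 < Real.exp (-μ * s) := Real.exp_pos _
    have h1 : (1 - Real.exp (-μ * s)) ^ j ≤ 1 := by
      apply pow_le_one₀ (by linarith) (by linarith)
    have h2 : Real.exp (-μ * c * s) ≤ Real.exp (-μ * s) := by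
      apply Real.exp_le_exp.mpr
      nlinarith [mul_nonneg (mul_nonneg hμ.le hs'.le) (sub_nonneg.mpr hc)]
    have h3 : 0 ≤ (1 - Real.exp (-μ * s)) ^ j := pow_nonneg (by linarith) _
    rw [Real.norm_eq_abs, abs_of_nonneg (mul_nonneg h3 (Real.exp_pos _).le)]
    calc (1 - Real.exp (-μ * s)) ^ j * Real.exp (-μ * c * s)
        ≤ 1 * Real.exp (-μ * s) := by
          apply mul_le_mul h1 h2 (Real.exp_pos _).le (by norm_num)
      _ = Real.exp (-μ * s) := one_mul _

lemma MDS_exp_integral (b : ℝ) (hb : 0 < b) :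
    ∫ s in Set.Ioi (0:ℝ), Real.exp (-b * s) = 1 / b := by
  have hderiv : ∀ x ∈ Set.Ioi (0:ℝ),
      HasDerivAt (fun s : ℝ => -Real.exp (-b * s) / b) (Real.exp (-b * x)) x := by
    intro x _
    have h := (((hasDerivAt_id x).const_mul (-b)).exp.neg).div_const b
    simpa [mul_comm, hb.ne'] using h
  have htend : Tendsto (fun s : ℝ => -Real.exp (-b * s) / b) atTop (𝓝 (-0 / b)) := by
    refine Tendsto.div_const (Tendsto.neg ?_) _
    exact Real.tendsto_exp_atBot.comp (tendsto_id.const_mul_atTop_of_neg (by linarith))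
  have hcont : ContinuousWithinAt (fun s : ℝ => -Real.exp (-b * s) / b) (Set.Ici 0) 0 := by
    apply Continuous.continuousWithinAt; fun_prop
  have := integral_Ioi_of_hasDerivAt_of_tendsto hcont hderiv
    (exp_neg_integrableOn_Ioi 0 hb) htend
  rw [this]
  simp
  ring

lemma MDS_key (μ : ℝ) (hμ : 0 < μ) (n : ℕ) :
    ∀ j, j < n →
      ∫ s in Set.Ioi (0:ℝ), (1 - Real.exp (-μ * s)) ^ j *
          Real.exp (-μ * ((n : ℝ) - (j : ℝ)) * s)
        = 1 / (((n - 1).choose j : ℝ) * (n : ℝ) * μ) := by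
  intro j
  induction j with
  | zero =>
    intro hn
    have hn' : (0:ℝ) < n := by exact_mod_cast hn
    simp only [pow_zero, one_mul, Nat.cast_zero, sub_zero, Nat.choose_zero_right,
      Nat.cast_one]
    have h := MDS_exp_integral (μ * (n : ℝ)) (by positivity)
    simp only [show ∀ s : ℝ, -μ * (n:ℝ) * s = -(μ * (n:ℝ)) * s from fun s => by ring]
    rw [h]
    ring
  | succ j ih =>
    intro hjn
    have hjn' : j < n := Nat.lt_of_succ_lt hjn
    have hj1n : (j : ℝ) + 1 ≤ (n : ℝ) - 1 := by
      have : j + 2 ≤ n := hjn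
      have := (Nat.cast_le (α := ℝ)).mpr this
      push_cast at this ⊢
      linarith
    set m : ℝ := (n : ℝ) - ((j:ℝ) + 1) with hm
    have hm1 : 1 ≤ m := by simp only [hm]; linarith
    have hm0 : 0 < m := by linarith
    have hnj1 : 1 ≤ (n : ℝ) - (j : ℝ) := by linarith
    -- F and its derivative
    set F : ℝ → ℝ := fun s => (1 - Real.exp (-μ * s)) ^ (j+1) * Real.exp (-μ * m * s) with hF
    set f' : ℝ → ℝ := fun s =>
      ((j:ℝ)+1) * μ * ((1 - Real.exp (-μ * s)) ^ j * Real.exp (-μ * ((n:ℝ) - (j:ℝ)) * s))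
        - μ * m * ((1 - Real.exp (-μ * s)) ^ (j+1) * Real.exp (-μ * m * s)) with hf'
    have hderiv : ∀ x ∈ Set.Ioi (0:ℝ), HasDerivAt F (f' x) x := by
      intro x _
      have hu : HasDerivAt (fun s : ℝ => Real.exp (-μ * s)) (-μ * Real.exp (-μ * x)) x := by
        simpa [mul_comm] using ((hasDerivAt_id x).const_mul (-μ)).exp
      have h1 : HasDerivAt (fun s : ℝ => (1 - Real.exp (-μ * s)) ^ (j+1))
          (((j:ℝ)+1) * (1 - Real.exp (-μ * x)) ^ j * (μ * Real.exp (-μ * x))) x := by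
        have := ((hasDerivAt_const x (1:ℝ)).sub hu).fun_pow (j+1)
        simpa [mul_comm, mul_assoc, mul_left_comm] using this
      have h2 : HasDerivAt (fun s : ℝ => Real.exp (-μ * m * s))
          (-μ * m * Real.exp (-μ * m * x)) x := by
        have := ((hasDerivAt_id x).const_mul (-μ * m)).exp
        simpa [mul_comm] using this
      have h3 := h1.fun_mul h2
      refine h3.congr_deriv ?_
      have hme : Real.exp (-μ * x) * Real.exp (-μ * m * x)
          = Real.exp (-μ * ((n:ℝ) - (j:ℝ)) * x) := by
        rw [← Real.exp_add]
        congr 1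
        simp only [hm]
        ring
      simp only [hf']
      rw [← hme]
      ring
    have hint1 : IntegrableOn
        (fun s : ℝ => (1 - Real.exp (-μ * s)) ^ j * Real.exp (-μ * ((n:ℝ) - (j:ℝ)) * s))
        (Set.Ioi (0:ℝ)) := MDS_integrable μ hμ j _ hnj1
    have hint2 : IntegrableOn
        (fun s : ℝ => (1 - Real.exp (-μ * s)) ^ (j+1) * Real.exp (-μ * m * s))
        (Set.Ioi (0:ℝ)) := MDS_integrable μ hμ (j+1) m hm1
    have hintf' : IntegrableOn f' (Set.Ioi (0:ℝ)) :=
      (hint1.const_mul _).sub (hint2.const_mul _)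
    have htend : Tendsto F atTop (𝓝 (1 * 0)) := by
      apply Tendsto.mul
      · have : Tendsto (fun s : ℝ => Real.exp (-μ * s)) atTop (𝓝 0) :=
          Real.tendsto_exp_atBot.comp (tendsto_id.const_mul_atTop_of_neg (by linarith))
        have h := ((tendsto_const_nhds (x := (1:ℝ))).sub this).pow (j+1)
        simpa using h
      · exact Real.tendsto_exp_atBot.comp
          (tendsto_id.const_mul_atTop_of_neg (by nlinarith))
    have hcont : ContinuousWithinAt F (Set.Ici 0) 0 := by
      apply Continuous.continuousWithinAt; fun_prop
    have hFTC := integral_Ioi_of_hasDerivAt_of_tendsto hcont hderiv hintf' htend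
    have hF0 : F 0 = 0 := by simp [hF]
    rw [hF0, one_mul, sub_zero] at hFTC
    -- split the integral
    have hsplit : ∫ s in Set.Ioi (0:ℝ), f' s
        = ((j:ℝ)+1) * μ * (∫ s in Set.Ioi (0:ℝ),
            (1 - Real.exp (-μ * s)) ^ j * Real.exp (-μ * ((n:ℝ) - (j:ℝ)) * s))
          - μ * m * (∫ s in Set.Ioi (0:ℝ),
            (1 - Real.exp (-μ * s)) ^ (j+1) * Real.exp (-μ * m * s)) := by
      simp only [hf']
      rw [integral_sub (hint1.const_mul _) (hint2.const_mul _),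
        integral_const_mul, integral_const_mul]
    rw [hsplit, ih hjn'] at hFTC
    -- now solve for the target integral
    have hI2 : ∫ s in Set.Ioi (0:ℝ),
        (1 - Real.exp (-μ * s)) ^ (j+1) * Real.exp (-μ * ((n:ℝ) - ((j:ℕ)+1:ℕ)) * s)
        = ∫ s in Set.Ioi (0:ℝ),
        (1 - Real.exp (-μ * s)) ^ (j+1) * Real.exp (-μ * m * s) := by
      congr 1
      funext s
      congr 2
      push_cast
      simp only [hm]
    have hcj : (0:ℝ) < ((n-1).choose j : ℝ) := by
      exact_mod_cast Nat.choose_pos (show j ≤ n - 1 by omega)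
    have hcj1 : (0:ℝ) < ((n-1).choose (j+1) : ℝ) := by
      exact_mod_cast Nat.choose_pos (show j + 1 ≤ n - 1 by omega)
    have hrec : ((n-1).choose (j+1) : ℝ) * ((j:ℝ)+1) = ((n-1).choose j : ℝ) * m := by
      have h := Nat.choose_succ_right_eq (n-1) j
      have hc : ((n-1).choose (j+1) * (j+1) : ℕ) = ((n-1).choose j * ((n-1) - j) : ℕ) := h
      have hcast := congrArg (Nat.cast : ℕ → ℝ) hc
      push_cast [Nat.cast_sub (show j ≤ n - 1 by omega), Nat.cast_sub (show 1 ≤ n by omega)] at hcast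
      rw [hcast]
      simp only [hm]
      ring
    rw [hI2]
    have hn0 : (0:ℝ) < (n:ℝ) := by
      have : 0 < n := by omega
      exact_mod_cast this
    set I := ∫ s in Set.Ioi (0:ℝ),
        (1 - Real.exp (-μ * s)) ^ (j+1) * Real.exp (-μ * m * s) with hIdef
    have h1 : μ * m * I = ((j:ℝ)+1) * μ * (1 / (((n-1).choose j : ℝ) * (n:ℝ) * μ)) := by
      linarith [hFTC]
    have h2 : I = ((j:ℝ)+1) / (((n-1).choose j : ℝ) * (n:ℝ) * m * μ) := by
      field_simp at h1 ⊢
      have h1' : (I * (((n-1).choose j : ℝ) * (n:ℝ) * m * μ)) * μ = (((j:ℝ)+1)) * μ := by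
        linear_combination μ * h1
      exact mul_right_cancel₀ hμ.ne' (by linear_combination h1')
    rw [h2, div_eq_div_iff (by positivity) (by positivity)]
    linear_combination (n:ℝ) * μ * hrec

/-- Integrating the survival function `P(T > s) = e^{-μs} Σ_{j=0}^{k-1} C(n-1,j)
(1-e^{-μs})^j e^{-μ(n-1-j)s}` of the download time of an (n,k)-MDS coded system
over `[0,∞)` gives `k/(nμ)`. -/
theorem integral_MDS_survival (μ : ℝ) (hμ : 0 < μ) (n k : ℕ) (hk : 1 ≤ k) (hkn : k < n) :
    ∫ s in Set.Ioi (0:ℝ),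
        Real.exp (-μ * s) *
          ∑ j ∈ Finset.range k,
            ((n - 1).choose j : ℝ) * (1 - Real.exp (-μ * s)) ^ j *
              Real.exp (-μ * ((n : ℝ) - 1 - (j : ℝ)) * s)
      = (k : ℝ) / ((n : ℝ) * μ) := by
  have hfun : (fun s : ℝ => Real.exp (-μ * s) *
          ∑ j ∈ Finset.range k,
            ((n - 1).choose j : ℝ) * (1 - Real.exp (-μ * s)) ^ j *
              Real.exp (-μ * ((n : ℝ) - 1 - (j : ℝ)) * s))
      = fun s : ℝ => ∑ j ∈ Finset.range k,
          ((n - 1).choose j : ℝ) *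
            ((1 - Real.exp (-μ * s)) ^ j * Real.exp (-μ * ((n : ℝ) - (j : ℝ)) * s)) := by
    funext s
    rw [Finset.mul_sum]
    refine Finset.sum_congr rfl fun j _ => ?_
    have he : Real.exp (-μ * s) * Real.exp (-μ * ((n : ℝ) - 1 - (j : ℝ)) * s)
        = Real.exp (-μ * ((n : ℝ) - (j : ℝ)) * s) := by
      rw [← Real.exp_add]; congr 1; ring
    calc Real.exp (-μ * s) * (((n - 1).choose j : ℝ) * (1 - Real.exp (-μ * s)) ^ j *
            Real.exp (-μ * ((n : ℝ) - 1 - (j : ℝ)) * s))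
        = ((n - 1).choose j : ℝ) * ((1 - Real.exp (-μ * s)) ^ j *
            (Real.exp (-μ * s) * Real.exp (-μ * ((n : ℝ) - 1 - (j : ℝ)) * s))) := by ring
      _ = _ := by rw [he]
  rw [hfun]
  have hcle : ∀ j ∈ Finset.range k, (1:ℝ) ≤ (n : ℝ) - (j : ℝ) := by
    intro j hj
    have hj' : j + 1 ≤ n := by
      have := Finset.mem_range.mp hj; omega
    have := (Nat.cast_le (α := ℝ)).mpr hj'
    push_cast at this; linarith
  rw [MeasureTheory.integral_finset_sum _ (fun j hj =>
    ((MDS_integrable μ hμ j _ (hcle j hj)).const_mul _))]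
  have : ∀ j ∈ Finset.range k,
      (((n - 1).choose j : ℝ) * ∫ s in Set.Ioi (0:ℝ),
        (1 - Real.exp (-μ * s)) ^ j * Real.exp (-μ * ((n : ℝ) - (j : ℝ)) * s))
      = 1 / ((n : ℝ) * μ) := by
    intro j hj
    have hjn : j < n := lt_of_lt_of_le (Finset.mem_range.mp hj) hkn.le
    rw [MDS_key μ hμ n j hjn]
    have hc : (0:ℝ) < ((n-1).choose j : ℝ) := by
      exact_mod_cast Nat.choose_pos (show j ≤ n - 1 by omega)
    have hn0 : (0:ℝ) < (n:ℝ) := by exact_mod_cast (by omega : 0 < n)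
    rw [mul_one_div, div_eq_div_iff (by positivity) (by positivity)]
    ring
  simp only [MeasureTheory.integral_const_mul]
  calc ∑ j ∈ Finset.range k, (((n - 1).choose j : ℝ) * ∫ s in Set.Ioi (0:ℝ),
          (1 - Real.exp (-μ * s)) ^ j * Real.exp (-μ * ((n : ℝ) - (j : ℝ)) * s))
      = ∑ j ∈ Finset.range k, (1 / ((n : ℝ) * μ)) := Finset.sum_congr rfl this
    _ = (k : ℝ) / ((n : ℝ) * μ) := by
        rw [Finset.sum_const, Finset.card_range, nsmul_eq_mul]
        ring
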